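/- Let S and T be sequences of steps such that S·n·e·T is a Schröder path of length n and the endpoint of S lies strictly above the main diagonal. Then S·d·T and S·e·n·T are also Schröder paths of length n, and LLT(S·n·e·T) = (q−1)·LLT(S·d·T) + LLT(S·e·n·T). -/
import Mathlib



/-- An LLT graph: a directed graph with three kinds of edges. -/
structure LLTGraph (V : Type) where
  E1 : Finset (V × V)
  E2 : Finset (V × V)
  Ed : Finset (V × V)

/-- The variable `q`, viewed inside `ℤ[q][x₁,…,x_N]`. -/
noncomputable def lltQ (N : ℕ) : MvPolynomial (Fin N) (Polynomial ℤ) :=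
  MvPolynomial.C Polynomial.X

/-- The LLT generating function of an LLT graph, read as a polynomial identity
in `ℤ[q][x₁,…,x_N]`, colorings taking values in `{1,…,N}` (as `Fin N`). -/
noncomputable def LLT {V : Type} [Fintype V] [DecidableEq V] (G : LLTGraph V) (N : ℕ) :
    MvPolynomial (Fin N) (Polynomial ℤ) :=
  ∑ f : V → Fin N,
    ((∏ e ∈ G.E1, if f e.2 < f e.1 then 1 else 0) *
      (∏ e ∈ G.E2, if f e.2 ≤ f e.1 then 1 else 0) *
      (∏ e ∈ G.Ed,
        ((if f e.2 < f e.1 then lltQ N else 0) + (if f e.1 ≤ f e.2 then 1 else 0)))) *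
    ∏ v : V, MvPolynomial.X (f v)

/-- `K_n^⇒` : the complete LLT graph on `{1,…,n}` whose only edges are
double edges `i ⇒ j` for `i < j`. -/
def KnGraph (n : ℕ) : LLTGraph (Fin n) where
  E1 := ∅
  E2 := ∅
  Ed := Finset.univ.filter fun p => p.1 < p.2
/-- Steps of a Schröder path: north `(0,1)`, east `(1,0)`, diagonal `(1,1)`. -/
inductive SStep : Type
  | north : SStep
  | east  : SStep
  | diag  : SStep
deriving DecidableEq

/-- The displacement vector of a step. -/
def SStep.vec : SStep → ℕ × ℕ
  | .north => (0, 1)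
  | .east  => (1, 0)
  | .diag  => (1, 1)

/-- Endpoint of a path started at the origin `(0,0)`. -/
def endPt (P : List SStep) : ℕ × ℕ :=
  P.foldl (fun p s => (p.1 + s.vec.1, p.2 + s.vec.2)) (0, 0)

/-- The lattice point reached after the first `k` steps. -/
def posAt (P : List SStep) (k : ℕ) : ℕ × ℕ := endPt (P.take k)

/-- A Schröder path of length `n`: from `(0,0)` to `(n,n)`, never strictly below
the main diagonal, with no diagonal step starting on the main diagonal. -/
def IsSchroder (n : ℕ) (P : List SStep) : Prop :=
  endPt P = (n, n) ∧
  (∀ k, (posAt P k).1 ≤ (posAt P k).2) ∧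
  (∀ k, P[k]? = some SStep.diag → (posAt P k).1 < (posAt P k).2)

/-- The box `(i,j)` (unit square with corners `(i-1,j-1)` and `(i,j)`, `i,j ≥ 1`)
contains a diagonal step of `P`. -/
def hasDiagStep (P : List SStep) (i j : ℕ) : Prop :=
  ∃ k, P[k]? = some SStep.diag ∧ posAt P k = (i - 1, j - 1)

/-- The box `(i,j)` lies (weakly) below the path `P`. -/
def boxBelow (P : List SStep) (i j : ℕ) : Prop :=
  ∃ k, (posAt P k).1 ≤ i - 1 ∧ j ≤ (posAt P k).2

open Classical in
/-- The LLT graph `G_P` of a Schröder path `P` of length `n`; vertex `v : Fin n`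
represents the label `v+1`. -/
noncomputable def pathGraph (n : ℕ) (P : List SStep) : LLTGraph (Fin n) where
  E1 := Finset.univ.filter fun p => hasDiagStep P ((p.1 : ℕ) + 1) ((p.2 : ℕ) + 1)
  E2 := ∅
  Ed := Finset.univ.filter fun p =>
    (p.1 : ℕ) < (p.2 : ℕ) ∧ boxBelow P ((p.1 : ℕ) + 1) ((p.2 : ℕ) + 1) ∧
      ¬ hasDiagStep P ((p.1 : ℕ) + 1) ((p.2 : ℕ) + 1)

/-- The height `h(i)` of column `i` of `P`: the `y` such that `(i-1,y)` lies on `P`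
and is followed by an east or diagonal step. -/
noncomputable def colHeight (P : List SStep) (i : ℕ) : ℕ :=
  sSup {y | ∃ k, posAt P k = (i - 1, y) ∧
    (P[k]? = some SStep.east ∨ P[k]? = some SStep.diag)}

/-- The jump `j(i) = h(i+1) - h(i)` of column `i`. -/
noncomputable def jump (P : List SStep) (i : ℕ) : ℕ :=
  colHeight P (i + 1) - colHeight P i

open Classical in
/-- The set of columns `1 ≤ i ≤ n` of `P` containing a diagonal step. -/
noncomputable def diagCols (n : ℕ) (P : List SStep) : Finset ℕ :=
  (Finset.Icc 1 n).filter fun i =>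
    ∃ k, P[k]? = some SStep.diag ∧ (posAt P k).1 = i - 1

/-- `P` is connected: the only points of `P` on the main diagonal are `(0,0)` and `(n,n)`. -/
def ConnectedPath (n : ℕ) (P : List SStep) : Prop :=
  ∀ k, (posAt P k).1 = (posAt P k).2 → posAt P k = (0, 0) ∨ posAt P k = (n, n)

/-- The first two steps of `P` are north and diagonal. -/
def FirstStepsND (P : List SStep) : Prop :=
  P[0]? = some SStep.north ∧ P[1]? = some SStep.diag

/-- `P` has no outer corner: no point of `P` is followed by an east step and then
a north step. -/
def NoOuterCorner (P : List SStep) : Prop :=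
  ¬ ∃ k, P[k]? = some SStep.east ∧ P[k + 1]? = some SStep.north

/-- `P` has no outer corner lying strictly above the main diagonal. -/
def NoOuterCornerAboveDiag (P : List SStep) : Prop :=
  ¬ ∃ k, (posAt P k).1 < (posAt P k).2 ∧
    P[k]? = some SStep.east ∧ P[k + 1]? = some SStep.north

/-- Every connected component of `P` of length `≥ 2` begins with the steps north,
diagonal: from every point on the diagonal the path continues with a north step,
followed either by a diagonal step, or by an east step (a length-one component). -/
def ComponentsStartND (P : List SStep) : Prop :=
  ∀ k < P.length, (posAt P k).1 = (posAt P k).2 →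
    P[k]? = some SStep.north ∧
      (P[k + 1]? = some SStep.diag ∨ P[k + 1]? = some SStep.east)

namespace SRelAux

/-- horizontal length -/
def xl (P : List SStep) : ℕ := (P.map fun s => s.vec.1).sum
/-- vertical length -/
def yl (P : List SStep) : ℕ := (P.map fun s => s.vec.2).sum

lemma foldl_eq (P : List SStep) : ∀ c : ℕ × ℕ,
    P.foldl (fun p s => (p.1 + s.vec.1, p.2 + s.vec.2)) c = (c.1 + xl P, c.2 + yl P) := by
  induction P with
  | nil => intro c; simp [xl, yl]
  | cons s P ih =>
      intro c
      simp only [List.foldl_cons, ih, xl, yl, List.map_cons, List.sum_cons]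
      rw [Prod.mk.injEq]; omega

lemma endPt_eq (P : List SStep) : endPt P = (xl P, yl P) := by
  simp [endPt, foldl_eq]

lemma posAt_eq (P : List SStep) (k : ℕ) : posAt P k = (xl (P.take k), yl (P.take k)) := by
  simp [posAt, endPt_eq]

lemma xl_append (A B : List SStep) : xl (A ++ B) = xl A + xl B := by simp [xl]
lemma yl_append (A B : List SStep) : yl (A ++ B) = yl A + yl B := by simp [yl]

lemma posAt_append_le {A : List SStep} (B : List SStep) {k : ℕ} (h : k ≤ A.length) :
    posAt (A ++ B) k = posAt A k := by
  rw [posAt_eq, posAt_eq, List.take_append, Nat.sub_eq_zero_of_le h]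
  simp

lemma posAt_append_ge {A : List SStep} (B : List SStep) {k : ℕ} (h : A.length ≤ k) :
    posAt (A ++ B) k = ((endPt A).1 + (posAt B (k - A.length)).1,
                        (endPt A).2 + (posAt B (k - A.length)).2) := by
  rw [posAt_eq, posAt_eq, endPt_eq, List.take_append,
    List.take_of_length_le h, xl_append, yl_append]

lemma posAt_length_le {P : List SStep} {k : ℕ} (h : P.length ≤ k) : posAt P k = endPt P := by
  rw [posAt_eq, endPt_eq, List.take_of_length_le h]

lemma posAt_fst_le (P : List SStep) (k : ℕ) : (posAt P k).1 ≤ (endPt P).1 := by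
  have h : xl P = xl (P.take k) + xl (P.drop k) := by
    rw [← xl_append, List.take_append_drop]
  rw [posAt_eq, endPt_eq]
  simp [h]

lemma posAt_snd_le (P : List SStep) (k : ℕ) : (posAt P k).2 ≤ (endPt P).2 := by
  have h : yl P = yl (P.take k) + yl (P.drop k) := by
    rw [← yl_append, List.take_append_drop]
  rw [posAt_eq, endPt_eq]
  simp [h]

lemma posAt_succ {P : List SStep} {k : ℕ} {st : SStep} (h : P[k]? = some st) :
    posAt P (k+1) = ((posAt P k).1 + st.vec.1, (posAt P k).2 + st.vec.2) := by
  rw [posAt_eq, posAt_eq, List.take_succ, h]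
  simp [xl_append, yl_append, xl, yl]

lemma posAt_zero (P : List SStep) : posAt P 0 = (0, 0) := rfl

lemma getElem?_append_le {A : List SStep} (B : List SStep) {k : ℕ} (h : k < A.length) :
    (A ++ B)[k]? = A[k]? := by rw [List.getElem?_append, if_pos h]

lemma getElem?_append_ge {A : List SStep} (B : List SStep) {k : ℕ} (h : A.length ≤ k) :
    (A ++ B)[k]? = B[k - A.length]? := List.getElem?_append_right h

lemma lt_length_of_getElem? {P : List SStep} {k : ℕ} {st : SStep} (h : P[k]? = some st) :
    k < P.length := by
  by_contra hc
  rw [List.getElem?_eq_none (by omega)] at h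
  cases h

lemma posAt3_left {S : List SStep} (M T : List SStep) {k : ℕ} (h : k ≤ S.length) :
    posAt (S ++ M ++ T) k = posAt S k := by
  rw [List.append_assoc]; exact posAt_append_le _ h

lemma posAt3_mid {S : List SStep} (M T : List SStep) {k : ℕ} (h1 : S.length ≤ k)
    (h2 : k - S.length ≤ M.length) :
    posAt (S ++ M ++ T) k =
      ((endPt S).1 + (posAt M (k - S.length)).1, (endPt S).2 + (posAt M (k - S.length)).2) := by
  rw [List.append_assoc, posAt_append_ge _ h1, posAt_append_le _ h2]

lemma posAt3_right {S : List SStep} (M T : List SStep) {k : ℕ} (h : S.length + M.length ≤ k) :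
    posAt (S ++ M ++ T) k =
      ((endPt S).1 + (endPt M).1 + (posAt T (k - S.length - M.length)).1,
       (endPt S).2 + (endPt M).2 + (posAt T (k - S.length - M.length)).2) := by
  rw [List.append_assoc, posAt_append_ge _ (le_trans (Nat.le_add_right _ _) h),
      posAt_append_ge _ (by omega : M.length ≤ k - S.length)]
  rw [Prod.mk.injEq, Nat.sub_sub]
  omega

lemma getElem3_left {S : List SStep} (M T : List SStep) {k : ℕ} (h : k < S.length) :
    (S ++ M ++ T)[k]? = S[k]? := by
  rw [List.append_assoc]; exact getElem?_append_le _ h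

lemma getElem3_mid {S : List SStep} (M T : List SStep) {k : ℕ} (h1 : S.length ≤ k)
    (h2 : k - S.length < M.length) :
    (S ++ M ++ T)[k]? = M[k - S.length]? := by
  rw [List.append_assoc, getElem?_append_ge _ h1, getElem?_append_le _ h2]

lemma getElem3_right {S : List SStep} (M T : List SStep) {k : ℕ} (h : S.length + M.length ≤ k) :
    (S ++ M ++ T)[k]? = T[k - S.length - M.length]? := by
  rw [List.append_assoc, getElem?_append_ge _ (le_trans (Nat.le_add_right _ _) h),
      getElem?_append_ge _ (by omega : M.length ≤ k - S.length), Nat.sub_sub]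

lemma endPt_ne2 : endPt [SStep.north, SStep.east] = (1,1) := by decide
lemma endPt_d2 : endPt [SStep.diag] = (1,1) := by decide
lemma endPt_en2 : endPt [SStep.east, SStep.north] = (1,1) := by decide
lemma posAt_ne1 : posAt [SStep.north, SStep.east] 1 = (0,1) := by decide
lemma posAt_en1 : posAt [SStep.east, SStep.north] 1 = (1,0) := by decide

section PathFacts
variable (S T : List SStep)

-- ### positions along S ++ [n,e] ++ T
lemma ne_pos_left {k : ℕ} (h : k ≤ S.length) :
    posAt (S ++ [SStep.north, SStep.east] ++ T) k = posAt S k := posAt3_left _ _ h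

lemma ne_pos_mid : posAt (S ++ [SStep.north, SStep.east] ++ T) (S.length + 1)
    = ((endPt S).1, (endPt S).2 + 1) := by
  rw [posAt3_mid _ _ (by omega) (by simp), Nat.add_sub_cancel_left, posAt_ne1]
  simp

lemma ne_pos_right (j : ℕ) : posAt (S ++ [SStep.north, SStep.east] ++ T) (S.length + 2 + j) =
    ((endPt S).1 + 1 + (posAt T j).1, (endPt S).2 + 1 + (posAt T j).2) := by
  have h2 : S.length + 2 + j - S.length - [SStep.north, SStep.east].length = j := by
    simp only [List.length_cons, List.length_nil]; omega
  rw [posAt3_right _ _ (by simp only [List.length_cons, List.length_nil]; omega), h2, endPt_ne2]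

lemma ne_step_left {k : ℕ} (h : k < S.length) :
    (S ++ [SStep.north, SStep.east] ++ T)[k]? = S[k]? := getElem3_left _ _ h

lemma ne_step_mid0 : (S ++ [SStep.north, SStep.east] ++ T)[S.length]? = some SStep.north := by
  rw [getElem3_mid _ _ le_rfl (by simp), Nat.sub_self]; rfl

lemma ne_step_mid1 : (S ++ [SStep.north, SStep.east] ++ T)[S.length + 1]? = some SStep.east := by
  rw [getElem3_mid _ _ (by omega) (by simp), Nat.add_sub_cancel_left]; rfl

lemma ne_step_right (j : ℕ) : (S ++ [SStep.north, SStep.east] ++ T)[S.length + 2 + j]? = T[j]? := by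
  have h2 : S.length + 2 + j - S.length - [SStep.north, SStep.east].length = j := by
    simp only [List.length_cons, List.length_nil]; omega
  rw [getElem3_right _ _ (by simp only [List.length_cons, List.length_nil]; omega), h2]

-- ### positions along S ++ [d] ++ T
lemma d_pos_left {k : ℕ} (h : k ≤ S.length) :
    posAt (S ++ [SStep.diag] ++ T) k = posAt S k := posAt3_left _ _ h

lemma d_pos_right (j : ℕ) : posAt (S ++ [SStep.diag] ++ T) (S.length + 1 + j) =
    ((endPt S).1 + 1 + (posAt T j).1, (endPt S).2 + 1 + (posAt T j).2) := by
  have h2 : S.length + 1 + j - S.length - [SStep.diag].length = j := by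
    simp only [List.length_cons, List.length_nil]; omega
  rw [posAt3_right _ _ (by simp only [List.length_cons, List.length_nil]; omega), h2, endPt_d2]

lemma d_step_left {k : ℕ} (h : k < S.length) :
    (S ++ [SStep.diag] ++ T)[k]? = S[k]? := getElem3_left _ _ h

lemma d_step_mid : (S ++ [SStep.diag] ++ T)[S.length]? = some SStep.diag := by
  rw [getElem3_mid _ _ le_rfl (by simp), Nat.sub_self]; rfl

lemma d_step_right (j : ℕ) : (S ++ [SStep.diag] ++ T)[S.length + 1 + j]? = T[j]? := by
  have h2 : S.length + 1 + j - S.length - [SStep.diag].length = j := by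
    simp only [List.length_cons, List.length_nil]; omega
  rw [getElem3_right _ _ (by simp only [List.length_cons, List.length_nil]; omega), h2]

-- ### positions along S ++ [e,n] ++ T
lemma en_pos_left {k : ℕ} (h : k ≤ S.length) :
    posAt (S ++ [SStep.east, SStep.north] ++ T) k = posAt S k := posAt3_left _ _ h

lemma en_pos_mid : posAt (S ++ [SStep.east, SStep.north] ++ T) (S.length + 1)
    = ((endPt S).1 + 1, (endPt S).2) := by
  rw [posAt3_mid _ _ (by omega) (by simp), Nat.add_sub_cancel_left, posAt_en1]
  simp

lemma en_pos_right (j : ℕ) : posAt (S ++ [SStep.east, SStep.north] ++ T) (S.length + 2 + j) =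
    ((endPt S).1 + 1 + (posAt T j).1, (endPt S).2 + 1 + (posAt T j).2) := by
  have h2 : S.length + 2 + j - S.length - [SStep.east, SStep.north].length = j := by
    simp only [List.length_cons, List.length_nil]; omega
  rw [posAt3_right _ _ (by simp only [List.length_cons, List.length_nil]; omega), h2, endPt_en2]

lemma en_step_left {k : ℕ} (h : k < S.length) :
    (S ++ [SStep.east, SStep.north] ++ T)[k]? = S[k]? := getElem3_left _ _ h

lemma en_step_mid0 : (S ++ [SStep.east, SStep.north] ++ T)[S.length]? = some SStep.east := by
  rw [getElem3_mid _ _ le_rfl (by simp), Nat.sub_self]; rfl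

lemma en_step_mid1 : (S ++ [SStep.east, SStep.north] ++ T)[S.length + 1]? = some SStep.north := by
  rw [getElem3_mid _ _ (by omega) (by simp), Nat.add_sub_cancel_left]; rfl

lemma en_step_right (j : ℕ) : (S ++ [SStep.east, SStep.north] ++ T)[S.length + 2 + j]? = T[j]? := by
  have h2 : S.length + 2 + j - S.length - [SStep.east, SStep.north].length = j := by
    simp only [List.length_cons, List.length_nil]; omega
  rw [getElem3_right _ _ (by simp only [List.length_cons, List.length_nil]; omega), h2]

end PathFacts

section Transfer
variable (S T : List SStep)

lemma diagS_endPt : ¬ ∃ k, S[k]? = some SStep.diag ∧ posAt S k = endPt S := by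
  rintro ⟨k, hk, hp⟩
  have h1 := posAt_succ hk
  have h2 := posAt_fst_le S (k + 1)
  rw [h1, hp] at h2
  simp only [SStep.vec] at h2
  simp at h2

/-- diagonal steps of `S ++ [n,e] ++ T`. -/
lemma ne_diagAt (p : ℕ × ℕ) :
    (∃ k, (S ++ [SStep.north, SStep.east] ++ T)[k]? = some SStep.diag ∧
        posAt (S ++ [SStep.north, SStep.east] ++ T) k = p) ↔
    ((∃ k, S[k]? = some SStep.diag ∧ posAt S k = p) ∨
     (∃ j, T[j]? = some SStep.diag ∧
        ((endPt S).1 + 1 + (posAt T j).1, (endPt S).2 + 1 + (posAt T j).2) = p)) := by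
  constructor
  · rintro ⟨k, hk, hpos⟩
    rcases lt_or_ge k S.length with h | h
    · rw [ne_step_left S T h] at hk
      rw [ne_pos_left S T h.le] at hpos
      exact Or.inl ⟨k, hk, hpos⟩
    · rcases Nat.lt_or_ge k (S.length + 2) with h2 | h2
      · rcases (by omega : k = S.length ∨ k = S.length + 1) with rfl | rfl
        · rw [ne_step_mid0 S T] at hk; simp at hk
        · rw [ne_step_mid1 S T] at hk; simp at hk
      · obtain ⟨j, rfl⟩ : ∃ j, k = S.length + 2 + j := ⟨k - (S.length + 2), by omega⟩
        rw [ne_step_right S T j] at hk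
        rw [ne_pos_right S T j] at hpos
        exact Or.inr ⟨j, hk, hpos⟩
  · rintro (⟨k, hk, hpos⟩ | ⟨j, hj, hpos⟩)
    · have hlt := lt_length_of_getElem? hk
      exact ⟨k, by rw [ne_step_left S T hlt]; exact hk, by rw [ne_pos_left S T hlt.le]; exact hpos⟩
    · exact ⟨S.length + 2 + j, by rw [ne_step_right S T j]; exact hj,
        by rw [ne_pos_right S T j]; exact hpos⟩

/-- diagonal steps of `S ++ [e,n] ++ T`. -/
lemma en_diagAt (p : ℕ × ℕ) :
    (∃ k, (S ++ [SStep.east, SStep.north] ++ T)[k]? = some SStep.diag ∧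
        posAt (S ++ [SStep.east, SStep.north] ++ T) k = p) ↔
    ((∃ k, S[k]? = some SStep.diag ∧ posAt S k = p) ∨
     (∃ j, T[j]? = some SStep.diag ∧
        ((endPt S).1 + 1 + (posAt T j).1, (endPt S).2 + 1 + (posAt T j).2) = p)) := by
  constructor
  · rintro ⟨k, hk, hpos⟩
    rcases lt_or_ge k S.length with h | h
    · rw [en_step_left S T h] at hk
      rw [en_pos_left S T h.le] at hpos
      exact Or.inl ⟨k, hk, hpos⟩
    · rcases Nat.lt_or_ge k (S.length + 2) with h2 | h2
      · rcases (by omega : k = S.length ∨ k = S.length + 1) with rfl | rfl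
        · rw [en_step_mid0 S T] at hk; simp at hk
        · rw [en_step_mid1 S T] at hk; simp at hk
      · obtain ⟨j, rfl⟩ : ∃ j, k = S.length + 2 + j := ⟨k - (S.length + 2), by omega⟩
        rw [en_step_right S T j] at hk
        rw [en_pos_right S T j] at hpos
        exact Or.inr ⟨j, hk, hpos⟩
  · rintro (⟨k, hk, hpos⟩ | ⟨j, hj, hpos⟩)
    · have hlt := lt_length_of_getElem? hk
      exact ⟨k, by rw [en_step_left S T hlt]; exact hk, by rw [en_pos_left S T hlt.le]; exact hpos⟩
    · exact ⟨S.length + 2 + j, by rw [en_step_right S T j]; exact hj,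
        by rw [en_pos_right S T j]; exact hpos⟩

/-- diagonal steps of `S ++ [d] ++ T`. -/
lemma d_diagAt (p : ℕ × ℕ) :
    (∃ k, (S ++ [SStep.diag] ++ T)[k]? = some SStep.diag ∧
        posAt (S ++ [SStep.diag] ++ T) k = p) ↔
    ((∃ k, S[k]? = some SStep.diag ∧ posAt S k = p) ∨ endPt S = p ∨
     (∃ j, T[j]? = some SStep.diag ∧
        ((endPt S).1 + 1 + (posAt T j).1, (endPt S).2 + 1 + (posAt T j).2) = p)) := by
  constructor
  · rintro ⟨k, hk, hpos⟩
    rcases lt_or_ge k S.length with h | h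
    · rw [d_step_left S T h] at hk
      rw [d_pos_left S T h.le] at hpos
      exact Or.inl ⟨k, hk, hpos⟩
    · rcases Nat.lt_or_ge k (S.length + 1) with h2 | h2
      · have hks : k = S.length := by omega
        subst hks
        rw [d_pos_left S T le_rfl, posAt_length_le le_rfl] at hpos
        exact Or.inr (Or.inl hpos)
      · obtain ⟨j, rfl⟩ : ∃ j, k = S.length + 1 + j := ⟨k - (S.length + 1), by omega⟩
        rw [d_step_right S T j] at hk
        rw [d_pos_right S T j] at hpos
        exact Or.inr (Or.inr ⟨j, hk, hpos⟩)
  · rintro (⟨k, hk, hpos⟩ | hp | ⟨j, hj, hpos⟩)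
    · have hlt := lt_length_of_getElem? hk
      exact ⟨k, by rw [d_step_left S T hlt]; exact hk, by rw [d_pos_left S T hlt.le]; exact hpos⟩
    · exact ⟨S.length, by rw [d_step_mid S T],
        by rw [d_pos_left S T le_rfl, posAt_length_le le_rfl]; exact hp⟩
    · exact ⟨S.length + 1 + j, by rw [d_step_right S T j]; exact hj,
        by rw [d_pos_right S T j]; exact hpos⟩

-- ### boxBelow transfer
lemma bb_d_ne {u v : ℕ} (h : boxBelow (S ++ [SStep.diag] ++ T) (u + 1) (v + 1)) :
    boxBelow (S ++ [SStep.north, SStep.east] ++ T) (u + 1) (v + 1) := by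
  simp only [boxBelow, Nat.add_sub_cancel] at h ⊢
  obtain ⟨k, h1, h2⟩ := h
  rcases le_or_gt k S.length with hk | hk
  · rw [d_pos_left S T hk] at h1 h2
    exact ⟨k, by rw [ne_pos_left S T hk]; exact h1, by rw [ne_pos_left S T hk]; exact h2⟩
  · obtain ⟨j, rfl⟩ : ∃ j, k = S.length + 1 + j := ⟨k - (S.length + 1), by omega⟩
    rw [d_pos_right S T j] at h1 h2
    exact ⟨S.length + 2 + j, by rw [ne_pos_right S T j]; exact h1,
      by rw [ne_pos_right S T j]; exact h2⟩

lemma bb_d_en {u v : ℕ} (h : boxBelow (S ++ [SStep.diag] ++ T) (u + 1) (v + 1)) :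
    boxBelow (S ++ [SStep.east, SStep.north] ++ T) (u + 1) (v + 1) := by
  simp only [boxBelow, Nat.add_sub_cancel] at h ⊢
  obtain ⟨k, h1, h2⟩ := h
  rcases le_or_gt k S.length with hk | hk
  · rw [d_pos_left S T hk] at h1 h2
    exact ⟨k, by rw [en_pos_left S T hk]; exact h1, by rw [en_pos_left S T hk]; exact h2⟩
  · obtain ⟨j, rfl⟩ : ∃ j, k = S.length + 1 + j := ⟨k - (S.length + 1), by omega⟩
    rw [d_pos_right S T j] at h1 h2
    exact ⟨S.length + 2 + j, by rw [en_pos_right S T j]; exact h1,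
      by rw [en_pos_right S T j]; exact h2⟩

lemma bb_en_d {u v : ℕ} (h : boxBelow (S ++ [SStep.east, SStep.north] ++ T) (u + 1) (v + 1)) :
    boxBelow (S ++ [SStep.diag] ++ T) (u + 1) (v + 1) := by
  simp only [boxBelow, Nat.add_sub_cancel] at h ⊢
  obtain ⟨k, h1, h2⟩ := h
  rcases le_or_gt k S.length with hk | hk
  · rw [en_pos_left S T hk] at h1 h2
    exact ⟨k, by rw [d_pos_left S T hk]; exact h1, by rw [d_pos_left S T hk]; exact h2⟩
  rcases Nat.lt_or_ge k (S.length + 2) with hk2 | hk2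
  · have hke : k = S.length + 1 := by omega
    subst hke
    rw [en_pos_mid S T] at h1 h2
    simp only [] at h1 h2
    refine ⟨S.length + 1 + 0, ?_, ?_⟩ <;>
      rw [d_pos_right S T 0, posAt_zero] <;> simp <;> omega
  · obtain ⟨j, rfl⟩ : ∃ j, k = S.length + 2 + j := ⟨k - (S.length + 2), by omega⟩
    rw [en_pos_right S T j] at h1 h2
    exact ⟨S.length + 1 + j, by rw [d_pos_right S T j]; exact h1,
      by rw [d_pos_right S T j]; exact h2⟩

lemma bb_ne_d {u v : ℕ} (h : boxBelow (S ++ [SStep.north, SStep.east] ++ T) (u + 1) (v + 1)) :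
    boxBelow (S ++ [SStep.diag] ++ T) (u + 1) (v + 1) ∨
      (u = (endPt S).1 ∧ v = (endPt S).2) := by
  simp only [boxBelow, Nat.add_sub_cancel] at h ⊢
  obtain ⟨k, h1, h2⟩ := h
  rcases le_or_gt k S.length with hk | hk
  · rw [ne_pos_left S T hk] at h1 h2
    exact Or.inl ⟨k, by rw [d_pos_left S T hk]; exact h1, by rw [d_pos_left S T hk]; exact h2⟩
  rcases Nat.lt_or_ge k (S.length + 2) with hk2 | hk2
  · have hke : k = S.length + 1 := by omega
    subst hke
    rw [ne_pos_mid S T] at h1 h2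
    simp only [] at h1 h2
    by_cases hv : v = (endPt S).2
    · by_cases hu : u = (endPt S).1
      · exact Or.inr ⟨hu, hv⟩
      · refine Or.inl ⟨S.length + 1 + 0, ?_, ?_⟩ <;>
          rw [d_pos_right S T 0, posAt_zero] <;> simp <;> omega
    · refine Or.inl ⟨S.length, ?_, ?_⟩ <;>
        rw [d_pos_left S T le_rfl, posAt_length_le le_rfl] <;> simp at h1 h2 ⊢ <;> omega
  · obtain ⟨j, rfl⟩ : ∃ j, k = S.length + 2 + j := ⟨k - (S.length + 2), by omega⟩
    rw [ne_pos_right S T j] at h1 h2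
    exact Or.inl ⟨S.length + 1 + j, by rw [d_pos_right S T j]; exact h1,
      by rw [d_pos_right S T j]; exact h2⟩

lemma bb_ne_ab : boxBelow (S ++ [SStep.north, SStep.east] ++ T)
    ((endPt S).1 + 1) ((endPt S).2 + 1) := by
  simp only [boxBelow, Nat.add_sub_cancel]
  refine ⟨S.length + 1, ?_, ?_⟩ <;> rw [ne_pos_mid S T]

lemma bb_en_ab : ¬ boxBelow (S ++ [SStep.east, SStep.north] ++ T)
    ((endPt S).1 + 1) ((endPt S).2 + 1) := by
  simp only [boxBelow, Nat.add_sub_cancel]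
  rintro ⟨k, h1, h2⟩
  rcases le_or_gt k S.length with hk | hk
  · rw [en_pos_left S T hk] at h2
    have := posAt_snd_le S k
    omega
  rcases Nat.lt_or_ge k (S.length + 2) with hk2 | hk2
  · have hke : k = S.length + 1 := by omega
    subst hke
    rw [en_pos_mid S T] at h1
    simp at h1
  · obtain ⟨j, rfl⟩ : ∃ j, k = S.length + 2 + j := ⟨k - (S.length + 2), by omega⟩
    rw [en_pos_right S T j] at h1
    simp at h1
    omega

end Transfer

end SRelAux


open SRelAux

/-- (Relation (A) on Schröder paths.) If `S·n·e·T` is a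
Schröder path of length `n` and the endpoint of `S` lies strictly above the
main diagonal, then `S·d·T` and `S·e·n·T` are Schröder paths of length `n` and
`LLT(S·n·e·T) = (q−1)·LLT(S·d·T) + LLT(S·e·n·T)`. -/
theorem llt_schroder_relation_A (n : ℕ) (S T : List SStep)
    (hP : IsSchroder n (S ++ [SStep.north, SStep.east] ++ T))
    (hS : (endPt S).1 < (endPt S).2) :
    IsSchroder n (S ++ [SStep.diag] ++ T) ∧
    IsSchroder n (S ++ [SStep.east, SStep.north] ++ T) ∧
    ∀ N : ℕ,
      LLT (pathGraph n (S ++ [SStep.north, SStep.east] ++ T)) N =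
        (lltQ N - 1) * LLT (pathGraph n (S ++ [SStep.diag] ++ T)) N +
          LLT (pathGraph n (S ++ [SStep.east, SStep.north] ++ T)) N := by
  classical
  obtain ⟨hEnd, hAbove, hDiag⟩ := hP
  have key : ∀ M : List SStep, endPt (S ++ M ++ T) =
      (xl S + (xl M + xl T), yl S + (yl M + yl T)) := by
    intro M
    rw [List.append_assoc, endPt_eq, xl_append, yl_append, xl_append, yl_append]
  have hEnd' := hEnd
  rw [key, Prod.mk.injEq] at hEnd'
  simp only [xl, yl, List.map_cons, List.map_nil, List.sum_cons, List.sum_nil,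
    SStep.vec] at hEnd'
  have hdEnd : endPt (S ++ [SStep.diag] ++ T) = (n, n) := by
    rw [key, Prod.mk.injEq]
    simp only [xl, yl, List.map_cons, List.map_nil, List.sum_cons, List.sum_nil, SStep.vec]
    omega
  have henEnd : endPt (S ++ [SStep.east, SStep.north] ++ T) = (n, n) := by
    rw [key, Prod.mk.injEq]
    simp only [xl, yl, List.map_cons, List.map_nil, List.sum_cons, List.sum_nil, SStep.vec]
    omega
  have hb1 : (endPt S).2 + 1 ≤ n := by
    have h1 := posAt_snd_le (S ++ [SStep.north, SStep.east] ++ T) (S.length + 1)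
    rw [ne_pos_mid S T, hEnd] at h1
    simpa using h1
  -- Schröder property for S ++ [d] ++ T
  have hd_sch : IsSchroder n (S ++ [SStep.diag] ++ T) := by
    refine ⟨hdEnd, ?_, ?_⟩
    · intro k
      rcases le_or_gt k S.length with hk | hk
      · rw [d_pos_left S T hk]
        have h := hAbove k
        rwa [ne_pos_left S T hk] at h
      · obtain ⟨j, rfl⟩ : ∃ j, k = S.length + 1 + j := ⟨k - (S.length + 1), by omega⟩
        rw [d_pos_right S T j]
        have h := hAbove (S.length + 2 + j)
        rwa [ne_pos_right S T j] at h
    · intro k hk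
      rcases lt_or_ge k S.length with h | h
      · rw [d_step_left S T h] at hk
        rw [d_pos_left S T h.le]
        have h2 := hDiag k (by rw [ne_step_left S T h]; exact hk)
        rwa [ne_pos_left S T h.le] at h2
      rcases Nat.lt_or_ge k (S.length + 1) with h2 | h2
      · have hks : k = S.length := by omega
        subst hks
        rw [d_pos_left S T le_rfl, posAt_length_le le_rfl]
        exact hS
      · obtain ⟨j, rfl⟩ : ∃ j, k = S.length + 1 + j := ⟨k - (S.length + 1), by omega⟩
        rw [d_step_right S T j] at hk
        rw [d_pos_right S T j]
        have h3 := hDiag (S.length + 2 + j) (by rw [ne_step_right S T j]; exact hk)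
        rwa [ne_pos_right S T j] at h3
  -- Schröder property for S ++ [e,n] ++ T
  have hen_sch : IsSchroder n (S ++ [SStep.east, SStep.north] ++ T) := by
    refine ⟨henEnd, ?_, ?_⟩
    · intro k
      rcases le_or_gt k S.length with hk | hk
      · rw [en_pos_left S T hk]
        have h := hAbove k
        rwa [ne_pos_left S T hk] at h
      rcases Nat.lt_or_ge k (S.length + 2) with hk2 | hk2
      · have hks : k = S.length + 1 := by omega
        subst hks
        rw [en_pos_mid S T]
        exact hS
      · obtain ⟨j, rfl⟩ : ∃ j, k = S.length + 2 + j := ⟨k - (S.length + 2), by omega⟩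
        rw [en_pos_right S T j]
        have h := hAbove (S.length + 2 + j)
        rwa [ne_pos_right S T j] at h
    · intro k hk
      rcases lt_or_ge k S.length with h | h
      · rw [en_step_left S T h] at hk
        rw [en_pos_left S T h.le]
        have h2 := hDiag k (by rw [ne_step_left S T h]; exact hk)
        rwa [ne_pos_left S T h.le] at h2
      rcases Nat.lt_or_ge k (S.length + 2) with h2 | h2
      · rcases (by omega : k = S.length ∨ k = S.length + 1) with rfl | rfl
        · rw [en_step_mid0 S T] at hk; simp at hk
        · rw [en_step_mid1 S T] at hk; simp at hk
      · obtain ⟨j, rfl⟩ : ∃ j, k = S.length + 2 + j := ⟨k - (S.length + 2), by omega⟩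
        rw [en_step_right S T j] at hk
        rw [en_pos_right S T j]
        have h3 := hDiag (S.length + 2 + j) (by rw [ne_step_right S T j]; exact hk)
        rwa [ne_pos_right S T j] at h3
  refine ⟨hd_sch, hen_sch, ?_⟩
  -- the LLT identity
  have han : (endPt S).1 < n := by omega
  have hbn : (endPt S).2 < n := by omega
  -- diagonal-step characterizations
  have hdiag_en_ne : ∀ u v : ℕ,
      hasDiagStep (S ++ [SStep.east, SStep.north] ++ T) (u + 1) (v + 1) ↔
      hasDiagStep (S ++ [SStep.north, SStep.east] ++ T) (u + 1) (v + 1) := by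
    intro u v
    simp only [hasDiagStep, Nat.add_sub_cancel]
    rw [en_diagAt S T (u, v), ne_diagAt S T (u, v)]
  have hdiag_d : ∀ u v : ℕ,
      hasDiagStep (S ++ [SStep.diag] ++ T) (u + 1) (v + 1) ↔
      ((u = (endPt S).1 ∧ v = (endPt S).2) ∨
        hasDiagStep (S ++ [SStep.north, SStep.east] ++ T) (u + 1) (v + 1)) := by
    intro u v
    simp only [hasDiagStep, Nat.add_sub_cancel]
    rw [d_diagAt S T (u, v), ne_diagAt S T (u, v)]
    have hmid : endPt S = (u, v) ↔ (u = (endPt S).1 ∧ v = (endPt S).2) := by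
      constructor
      · intro h; rw [h]; exact ⟨rfl, rfl⟩
      · rintro ⟨rfl, rfl⟩; exact Prod.mk.eta.symm
    rw [hmid]
    exact or_left_comm
  have hdiag_ne_ab : ¬ hasDiagStep (S ++ [SStep.north, SStep.east] ++ T)
      ((endPt S).1 + 1) ((endPt S).2 + 1) := by
    simp only [hasDiagStep, Nat.add_sub_cancel]
    rw [ne_diagAt S T ((endPt S).1, (endPt S).2)]
    rintro (h | ⟨j, hj, hp⟩)
    · simp only [Prod.mk.eta] at h
      exact diagS_endPt S h
    · rw [Prod.mk.injEq] at hp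
      omega
  have hdiag_d_ab : hasDiagStep (S ++ [SStep.diag] ++ T)
      ((endPt S).1 + 1) ((endPt S).2 + 1) := by
    simp only [hasDiagStep, Nat.add_sub_cancel]
    rw [d_diagAt S T ((endPt S).1, (endPt S).2)]
    exact Or.inr (Or.inl Prod.mk.eta.symm)
  -- graph identities
  have hE1en : (pathGraph n (S ++ [SStep.east, SStep.north] ++ T)).E1 =
      (pathGraph n (S ++ [SStep.north, SStep.east] ++ T)).E1 := by
    ext p
    simp only [pathGraph, Finset.mem_filter, Finset.mem_univ, true_and]
    exact hdiag_en_ne p.1 p.2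
  have hE1d : (pathGraph n (S ++ [SStep.diag] ++ T)).E1 =
      insert ((⟨(endPt S).1, han⟩, ⟨(endPt S).2, hbn⟩) : Fin n × Fin n)
        (pathGraph n (S ++ [SStep.north, SStep.east] ++ T)).E1 := by
    ext p
    simp only [pathGraph, Finset.mem_filter, Finset.mem_univ, true_and, Finset.mem_insert,
      Prod.ext_iff, Fin.ext_iff]
    rw [hdiag_d p.1 p.2]
  have hEd_d_en : (pathGraph n (S ++ [SStep.diag] ++ T)).Ed =
      (pathGraph n (S ++ [SStep.east, SStep.north] ++ T)).Ed := by
    ext p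
    simp only [pathGraph, Finset.mem_filter, Finset.mem_univ, true_and]
    by_cases hp : (p.1 : ℕ) = (endPt S).1 ∧ (p.2 : ℕ) = (endPt S).2
    · obtain ⟨h1, h2⟩ := hp
      constructor
      · rintro ⟨-, -, hnd⟩
        rw [h1, h2] at hnd
        exact absurd hdiag_d_ab hnd
      · rintro ⟨-, hbb, -⟩
        rw [h1, h2] at hbb
        exact absurd hbb (bb_en_ab S T)
    · have hd1 : hasDiagStep (S ++ [SStep.diag] ++ T) ((p.1:ℕ)+1) ((p.2:ℕ)+1) ↔
          hasDiagStep (S ++ [SStep.north, SStep.east] ++ T) ((p.1:ℕ)+1) ((p.2:ℕ)+1) :=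
        (hdiag_d _ _).trans (or_iff_right hp)
      have hd2 : hasDiagStep (S ++ [SStep.east, SStep.north] ++ T) ((p.1:ℕ)+1) ((p.2:ℕ)+1) ↔
          hasDiagStep (S ++ [SStep.diag] ++ T) ((p.1:ℕ)+1) ((p.2:ℕ)+1) :=
        (hdiag_en_ne _ _).trans hd1.symm
      constructor
      · rintro ⟨hlt, hbb, hnd⟩
        exact ⟨hlt, bb_d_en S T hbb, fun h => hnd (hd2.mp h)⟩
      · rintro ⟨hlt, hbb, hnd⟩
        exact ⟨hlt, bb_en_d S T hbb, fun h => hnd (hd2.mpr h)⟩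
  have hEd_ne : (pathGraph n (S ++ [SStep.north, SStep.east] ++ T)).Ed =
      insert ((⟨(endPt S).1, han⟩, ⟨(endPt S).2, hbn⟩) : Fin n × Fin n)
        (pathGraph n (S ++ [SStep.diag] ++ T)).Ed := by
    ext p
    simp only [pathGraph, Finset.mem_filter, Finset.mem_univ, true_and, Finset.mem_insert,
      Prod.ext_iff, Fin.ext_iff]
    by_cases hp : (p.1 : ℕ) = (endPt S).1 ∧ (p.2 : ℕ) = (endPt S).2
    · obtain ⟨h1, h2⟩ := hp
      constructor
      · rintro -
        exact Or.inl ⟨h1, h2⟩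
      · rintro -
        refine ⟨?_, ?_, ?_⟩
        · rw [h1, h2]; exact hS
        · rw [h1, h2]; exact bb_ne_ab S T
        · rw [h1, h2]; exact hdiag_ne_ab
    · have hd1 : hasDiagStep (S ++ [SStep.diag] ++ T) ((p.1:ℕ)+1) ((p.2:ℕ)+1) ↔
          hasDiagStep (S ++ [SStep.north, SStep.east] ++ T) ((p.1:ℕ)+1) ((p.2:ℕ)+1) :=
        (hdiag_d _ _).trans (or_iff_right hp)
      constructor
      · rintro ⟨hlt, hbb, hnd⟩
        refine Or.inr ⟨hlt, ?_, fun h => hnd (hd1.mp h)⟩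
        rcases bb_ne_d S T hbb with h | h
        · exact h
        · exact absurd h hp
      · rintro (h | ⟨hlt, hbb, hnd⟩)
        · exact absurd h hp
        · exact ⟨hlt, bb_d_ne S T hbb, fun h => hnd (hd1.mpr h)⟩
  have he0E1 : ((⟨(endPt S).1, han⟩, ⟨(endPt S).2, hbn⟩) : Fin n × Fin n) ∉
      (pathGraph n (S ++ [SStep.north, SStep.east] ++ T)).E1 := by
    simp only [pathGraph, Finset.mem_filter, Finset.mem_univ, true_and]
    exact hdiag_ne_ab
  have he0Ed : ((⟨(endPt S).1, han⟩, ⟨(endPt S).2, hbn⟩) : Fin n × Fin n) ∉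
      (pathGraph n (S ++ [SStep.east, SStep.north] ++ T)).Ed := by
    simp only [pathGraph, Finset.mem_filter, Finset.mem_univ, true_and]
    rintro ⟨-, hbb, -⟩
    exact bb_en_ab S T hbb
  intro N
  unfold LLT
  rw [hEd_ne, hE1d, hEd_d_en, hE1en]
  have hE2 : ∀ P : List SStep, (pathGraph n P).E2 = (∅ : Finset (Fin n × Fin n)) :=
    fun _ => rfl
  simp only [hE2, Finset.prod_empty, mul_one, Finset.prod_insert he0E1,
    Finset.prod_insert he0Ed]
  rw [Finset.mul_sum, ← Finset.sum_add_distrib]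
  refine Finset.sum_congr rfl fun f _ => ?_
  by_cases hf : f (⟨(endPt S).2, hbn⟩ : Fin n) < f (⟨(endPt S).1, han⟩ : Fin n)
  · rw [if_pos hf, if_pos hf, if_neg (not_le.mpr hf)]
    ring
  · rw [if_neg hf, if_neg hf, if_pos (not_lt.mp hf)]
    ring
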